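/- arXiv:0712.3962 — 5 statements merged into one kernel-verified Lean document; each statement's English description precedes it below -/
import Mathlib

section
/- In the Lorentz algebra o(3,1), the r-matrix r₂ = α(e_+ ∧ h − e'_+ ∧ h') + 2β e'_+ ∧ e_+ satisfies the homogeneous classical Yang–Baxter equation for all scalars α, β. -/
open scoped TensorProduct

set_option maxHeartbeats 2000000

/-- in the Lorentz algebra `o(3,1)`, the r-matrix
`r₂ = α(e₊ ∧ h − e'₊ ∧ h') + 2β e'₊ ∧ e₊` satisfies the homogeneous CYBE. -/
theorem lorentz_r2_cybe {L : Type*} [LieRing L] [LieAlgebra ℂ L]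
    (h ep em h' ep' em' : L)
    (hhep : ⁅h, ep⁆ = ep) (hhem : ⁅h, em⁆ = -em) (hepem : ⁅ep, em⁆ = (2 : ℂ) • h)
    (hhep' : ⁅h, ep'⁆ = ep') (hhem' : ⁅h, em'⁆ = -em')
    (hh'ep : ⁅h', ep⁆ = ep') (hh'em : ⁅h', em⁆ = -em')
    (hepem' : ⁅ep, em'⁆ = (2 : ℂ) • h') (hemep' : ⁅em, ep'⁆ = -((2 : ℂ) • h'))
    (hh'ep' : ⁅h', ep'⁆ = -ep) (hh'em' : ⁅h', em'⁆ = em)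
    (hep'em' : ⁅ep', em'⁆ = -((2 : ℂ) • h))
    (hhh' : ⁅h, h'⁆ = 0) (hepep' : ⁅ep, ep'⁆ = 0) (hemem' : ⁅em, em'⁆ = 0)
    (α β : ℂ) :
    let A := UniversalEnvelopingAlgebra ℂ L
    let ι : L → A := fun v => UniversalEnvelopingAlgebra.ι ℂ v
    let w : L → L → A ⊗[ℂ] A := fun a b => ι a ⊗ₜ[ℂ] ι b - ι b ⊗ₜ[ℂ] ι a
    let r : A ⊗[ℂ] A := α • (w ep h - w ep' h') + (2 * β) • w ep' ep
    let E12 : (A ⊗[ℂ] A) →ₐ[ℂ] A ⊗[ℂ] (A ⊗[ℂ] A) :=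
      Algebra.TensorProduct.map (AlgHom.id ℂ A) Algebra.TensorProduct.includeLeft
    let E13 : (A ⊗[ℂ] A) →ₐ[ℂ] A ⊗[ℂ] (A ⊗[ℂ] A) :=
      Algebra.TensorProduct.map (AlgHom.id ℂ A) Algebra.TensorProduct.includeRight
    let E23 : (A ⊗[ℂ] A) →ₐ[ℂ] A ⊗[ℂ] (A ⊗[ℂ] A) := Algebra.TensorProduct.includeRight
    ⁅E12 r, E13 r⁆ + ⁅E12 r, E23 r⁆ + ⁅E13 r, E23 r⁆ = 0 := by
  intro A ι w r E12 E13 E23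
  have key : ∀ a b : L, ι b * ι a = ι a * ι b - ι ⁅a, b⁆ := by
    intro a b
    letI : LieRing A := LieRing.ofAssociativeRing
    have hb := LieHom.map_lie (UniversalEnvelopingAlgebra.ι ℂ (L := L)) a b
    rw [Ring.lie_def] at hb
    simp only [ι]
    rw [hb]
    abel
  have ineg : ∀ a : L, (ι (-a) : A) = -(ι a) := by
    intro a; simp only [ι]
    exact map_neg ((UniversalEnvelopingAlgebra.ι ℂ (L := L)) : L →ₗ[ℂ] A) a
  have izero : (ι (0 : L) : A) = 0 := by
    simp only [ι]
    exact map_zero ((UniversalEnvelopingAlgebra.ι ℂ (L := L)) : L →ₗ[ℂ] A)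
  have cPH : ι ep * ι h = ι h * ι ep - ι ep := by rw [key h ep, hhep]
  have cP'H : ι ep' * ι h = ι h * ι ep' - ι ep' := by rw [key h ep', hhep']
  have cPH' : ι ep * ι h' = ι h' * ι ep - ι ep' := by rw [key h' ep, hh'ep]
  have cP'H' : ι ep' * ι h' = ι h' * ι ep' + ι ep := by
    rw [key h' ep', hh'ep', ineg]
    abel
  have cP'P : ι ep' * ι ep = ι ep * ι ep' := by
    rw [key ep ep', hepep', izero]
    abel
  have cH'H : ι h' * ι h = ι h * ι h' := by
    rw [key h h', hhh', izero]
    abel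
  simp only [r, w, E12, E13, E23, map_add, map_sub, map_smul,
    Algebra.TensorProduct.map_tmul, AlgHom.coe_id, id_eq,
    Algebra.TensorProduct.includeLeft_apply, Algebra.TensorProduct.includeRight_apply,
    Ring.lie_def, mul_add, add_mul, sub_mul, mul_sub, smul_mul_assoc, mul_smul_comm,
    Algebra.TensorProduct.tmul_mul_tmul, one_mul, mul_one, smul_smul,
    cPH, cP'H, cPH', cP'H', cP'P, cH'H,
    TensorProduct.tmul_add, TensorProduct.add_tmul, TensorProduct.tmul_sub,
    TensorProduct.sub_tmul, TensorProduct.smul_tmul', TensorProduct.tmul_smul]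
  module
end

section
/- In sl(2,ℂ) ⊕ sl(2,ℂ) with commuting sl(2)-triples (H₁, E_{1±}) and (H₂, E_{2±}), the two-tensor r'₃ = 2(β + iα) E_{1+} ∧ E_{1−} + 2(β − iα) E_{2+} ∧ E_{2−} satisfies the modified (non-homogeneous) classical Yang–Baxter equation: the expression [r^{12}, r^{13}] + [r^{12}, r^{23}] + [r^{13}, r^{23}] equals an invariant element Ω of Λ³(sl₂ ⊕ sl₂), i.e. [x ⊗ 1 ⊗ 1 + 1 ⊗ x ⊗ 1 + 1 ⊗ 1 ⊗ x, Ω] = 0 for all x in the Lie algebra. -/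
open scoped TensorProduct
open TensorProduct

section aux
variable {R : Type*} [CommRing R] {A B C : Type*} [Ring A] [Ring B] [Ring C]
  [Algebra R A] [Algebra R B] [Algebra R C]

lemma der3 (x : A) (y : B) (z : C) (a : A) (b : B) (c : C) :
    ⁅x ⊗ₜ[R] ((1:B) ⊗ₜ[R] (1:C)) + (1:A) ⊗ₜ[R] (y ⊗ₜ[R] (1:C)) + (1:A) ⊗ₜ[R] ((1:B) ⊗ₜ[R] z),
      a ⊗ₜ[R] (b ⊗ₜ[R] c)⁆
    = ⁅x,a⁆ ⊗ₜ[R] (b ⊗ₜ[R] c) + a ⊗ₜ[R] (⁅y,b⁆ ⊗ₜ[R] c) + a ⊗ₜ[R] (b ⊗ₜ[R] ⁅z,c⁆) := by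
  simp only [Ring.lie_def, Algebra.TensorProduct.tmul_mul_tmul, one_mul, mul_one,
    add_mul, mul_add, sub_tmul, tmul_sub]
  abel

lemma c12_13 (a b a' c : A) :
    ⁅a ⊗ₜ[R] (b ⊗ₜ[R] (1:A)), a' ⊗ₜ[R] ((1:A) ⊗ₜ[R] c)⁆ = ⁅a,a'⁆ ⊗ₜ[R] (b ⊗ₜ[R] c) := by
  simp only [Ring.lie_def, Algebra.TensorProduct.tmul_mul_tmul, one_mul, mul_one, sub_tmul]

lemma c12_23 (a b b' c : A) :
    ⁅a ⊗ₜ[R] (b ⊗ₜ[R] (1:A)), (1:A) ⊗ₜ[R] (b' ⊗ₜ[R] c)⁆ = a ⊗ₜ[R] (⁅b,b'⁆ ⊗ₜ[R] c) := by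
  simp only [Ring.lie_def, Algebra.TensorProduct.tmul_mul_tmul, one_mul, mul_one, sub_tmul,
    tmul_sub]

lemma c13_23 (a c b c' : A) :
    ⁅a ⊗ₜ[R] ((1:A) ⊗ₜ[R] c), (1:A) ⊗ₜ[R] (b ⊗ₜ[R] c')⁆ = a ⊗ₜ[R] (b ⊗ₜ[R] ⁅c,c'⁆) := by
  simp only [Ring.lie_def, Algebra.TensorProduct.tmul_mul_tmul, one_mul, mul_one, sub_tmul,
    tmul_sub]

lemma rsmul_lie (s : R) (x y : A) :
    ⁅s • x, y⁆ = s • ⁅x, y⁆ := by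
  simp only [Ring.lie_def, smul_mul_assoc, mul_smul_comm, smul_sub]

lemma rlie_smul (s : R) (x y : A) :
    ⁅x, s • y⁆ = s • ⁅x, y⁆ := by
  simp only [Ring.lie_def, smul_mul_assoc, mul_smul_comm, smul_sub]

end aux

section sl2

attribute [local instance 100] LieRing.ofAssociativeRing

variable {L : Type*} [LieRing L] [LieAlgebra ℂ L] {A : Type*} [Ring A] [Algebra ℂ A]

set_option maxHeartbeats 1600000 in
/-- Closed form of the Yang–Baxter expression of `r'₃`. -/
lemma omega_closed_form (j : L →ₗ⁅ℂ⁆ A)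
    (H1 E1p E1m H2 E2p E2m : L)
    (t1c : ⁅E1p, E1m⁆ = (2 : ℂ) • H1) (t2c : ⁅E2p, E2m⁆ = (2 : ℂ) • H2)
    (c5 : ⁅E1p, E2p⁆ = 0) (c6 : ⁅E1p, E2m⁆ = 0) (c7 : ⁅E1m, E2p⁆ = 0) (c8 : ⁅E1m, E2m⁆ = 0)
    (α β : ℂ)
    (r : A ⊗[ℂ] A)
    (hr : r = (2 * (β + Complex.I * α)) • (j E1p ⊗ₜ[ℂ] j E1m - j E1m ⊗ₜ[ℂ] j E1p)
        + (2 * (β - Complex.I * α)) • (j E2p ⊗ₜ[ℂ] j E2m - j E2m ⊗ₜ[ℂ] j E2p)) :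
    ⁅(Algebra.TensorProduct.map (AlgHom.id ℂ A)
        (Algebra.TensorProduct.includeLeft : A →ₐ[ℂ] A ⊗[ℂ] A)) r,
      (Algebra.TensorProduct.map (AlgHom.id ℂ A)
        (Algebra.TensorProduct.includeRight : A →ₐ[ℂ] A ⊗[ℂ] A)) r⁆ +
    ⁅(Algebra.TensorProduct.map (AlgHom.id ℂ A)
        (Algebra.TensorProduct.includeLeft : A →ₐ[ℂ] A ⊗[ℂ] A)) r,
      (Algebra.TensorProduct.includeRight : A ⊗[ℂ] A →ₐ[ℂ] A ⊗[ℂ] (A ⊗[ℂ] A)) r⁆ +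
    ⁅(Algebra.TensorProduct.map (AlgHom.id ℂ A)
        (Algebra.TensorProduct.includeRight : A →ₐ[ℂ] A ⊗[ℂ] A)) r,
      (Algebra.TensorProduct.includeRight : A ⊗[ℂ] A →ₐ[ℂ] A ⊗[ℂ] (A ⊗[ℂ] A)) r⁆
    = (2*(2*(β + Complex.I*α))^2) •
      (j H1 ⊗ₜ[ℂ] (j E1p ⊗ₜ[ℂ] j E1m) - j H1 ⊗ₜ[ℂ] (j E1m ⊗ₜ[ℂ] j E1p)
        - j E1p ⊗ₜ[ℂ] (j H1 ⊗ₜ[ℂ] j E1m) + j E1m ⊗ₜ[ℂ] (j H1 ⊗ₜ[ℂ] j E1p)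
        + j E1p ⊗ₜ[ℂ] (j E1m ⊗ₜ[ℂ] j H1) - j E1m ⊗ₜ[ℂ] (j E1p ⊗ₜ[ℂ] j H1))
      + (2*(2*(β - Complex.I*α))^2) •
      (j H2 ⊗ₜ[ℂ] (j E2p ⊗ₜ[ℂ] j E2m) - j H2 ⊗ₜ[ℂ] (j E2m ⊗ₜ[ℂ] j E2p)
        - j E2p ⊗ₜ[ℂ] (j H2 ⊗ₜ[ℂ] j E2m) + j E2m ⊗ₜ[ℂ] (j H2 ⊗ₜ[ℂ] j E2p)
        + j E2p ⊗ₜ[ℂ] (j E2m ⊗ₜ[ℂ] j H2) - j E2m ⊗ₜ[ℂ] (j E2p ⊗ₜ[ℂ] j H2)) := by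
  have hbsl : ∀ (c : ℂ) (X Y : A ⊗[ℂ] (A ⊗[ℂ] A)), ⁅c • X, Y⁆ = c • ⁅X, Y⁆ := fun c X Y => by
    rw [Ring.lie_def, Ring.lie_def, mul_smul_comm, smul_mul_assoc, smul_sub]
  have hbsr : ∀ (c : ℂ) (X Y : A ⊗[ℂ] (A ⊗[ℂ] A)), ⁅X, c • Y⁆ = c • ⁅X, Y⁆ := fun c X Y => by
    rw [Ring.lie_def, Ring.lie_def, mul_smul_comm, smul_mul_assoc, smul_sub]
  have r1c : ⁅E1m, E1p⁆ = -((2:ℂ) • H1) := by rw [← lie_skew, t1c]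
  have r2c : ⁅E2m, E2p⁆ = -((2:ℂ) • H2) := by rw [← lie_skew, t2c]
  have rc5 : ⁅E2p, E1p⁆ = 0 := by rw [← lie_skew, c5, neg_zero]
  have rc6 : ⁅E2m, E1p⁆ = 0 := by rw [← lie_skew, c6, neg_zero]
  have rc7 : ⁅E2p, E1m⁆ = 0 := by rw [← lie_skew, c7, neg_zero]
  have rc8 : ⁅E2m, E1m⁆ = 0 := by rw [← lie_skew, c8, neg_zero]
  have hι : ∀ u v : L, ⁅j u, j v⁆ = j ⁅u, v⁆ := fun u v => (j.map_lie u v).symm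
  have hsm : ∀ (s : ℂ) (v : L), j (s • v) = s • j v := fun s v => map_smul j.toLinearMap s v
  have hneg : ∀ v : L, j (-v) = -j v := fun v => map_neg j.toLinearMap v
  have hzero : j 0 = 0 := map_zero j.toLinearMap
  subst hr
  simp only [map_add, map_smul, map_sub, Algebra.TensorProduct.map_tmul, AlgHom.coe_id, id_eq,
    Algebra.TensorProduct.includeLeft_apply, Algebra.TensorProduct.includeRight_apply,
    add_lie, lie_add, hbsl, hbsr, sub_lie, lie_sub,
    c12_13, c12_23, c13_23, hι, t1c, t2c, r1c, r2c, lie_self,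
    c5, c6, c7, c8, rc5, rc6, rc7, rc8, hsm, hneg, hzero,
    zero_tmul, tmul_zero, neg_tmul, tmul_neg,
    ← TensorProduct.smul_tmul', TensorProduct.tmul_smul,
    smul_zero, smul_neg, sub_zero, zero_sub, add_zero, zero_add, sub_neg_eq_add, neg_neg]
  module

set_option maxHeartbeats 1600000 in
/-- Invariance of the closed form. -/
lemma omega_invariant (j : L →ₗ⁅ℂ⁆ A)
    (H1 E1p E1m H2 E2p E2m : L)
    (t1a : ⁅H1, E1p⁆ = E1p) (t1b : ⁅H1, E1m⁆ = -E1m) (t1c : ⁅E1p, E1m⁆ = (2 : ℂ) • H1)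
    (t2a : ⁅H2, E2p⁆ = E2p) (t2b : ⁅H2, E2m⁆ = -E2m) (t2c : ⁅E2p, E2m⁆ = (2 : ℂ) • H2)
    (c0 : ⁅H1, H2⁆ = 0) (c1 : ⁅H1, E2p⁆ = 0) (c2 : ⁅H1, E2m⁆ = 0)
    (c3 : ⁅H2, E1p⁆ = 0) (c4 : ⁅H2, E1m⁆ = 0)
    (c5 : ⁅E1p, E2p⁆ = 0) (c6 : ⁅E1p, E2m⁆ = 0) (c7 : ⁅E1m, E2p⁆ = 0) (c8 : ⁅E1m, E2m⁆ = 0)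
    (α β : ℂ) (Ω : A ⊗[ℂ] (A ⊗[ℂ] A))
    (hΩ : Ω = (2*(2*(β + Complex.I*α))^2) •
      (j H1 ⊗ₜ[ℂ] (j E1p ⊗ₜ[ℂ] j E1m) - j H1 ⊗ₜ[ℂ] (j E1m ⊗ₜ[ℂ] j E1p)
        - j E1p ⊗ₜ[ℂ] (j H1 ⊗ₜ[ℂ] j E1m) + j E1m ⊗ₜ[ℂ] (j H1 ⊗ₜ[ℂ] j E1p)
        + j E1p ⊗ₜ[ℂ] (j E1m ⊗ₜ[ℂ] j H1) - j E1m ⊗ₜ[ℂ] (j E1p ⊗ₜ[ℂ] j H1))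
      + (2*(2*(β - Complex.I*α))^2) •
      (j H2 ⊗ₜ[ℂ] (j E2p ⊗ₜ[ℂ] j E2m) - j H2 ⊗ₜ[ℂ] (j E2m ⊗ₜ[ℂ] j E2p)
        - j E2p ⊗ₜ[ℂ] (j H2 ⊗ₜ[ℂ] j E2m) + j E2m ⊗ₜ[ℂ] (j H2 ⊗ₜ[ℂ] j E2p)
        + j E2p ⊗ₜ[ℂ] (j E2m ⊗ₜ[ℂ] j H2) - j E2m ⊗ₜ[ℂ] (j E2p ⊗ₜ[ℂ] j H2))) :
    ∀ x ∈ LieSubalgebra.lieSpan ℂ L {H1, E1p, E1m, H2, E2p, E2m},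
      ⁅j x ⊗ₜ[ℂ] ((1 : A) ⊗ₜ[ℂ] (1 : A)) + (1 : A) ⊗ₜ[ℂ] (j x ⊗ₜ[ℂ] (1 : A)) +
        (1 : A) ⊗ₜ[ℂ] ((1 : A) ⊗ₜ[ℂ] j x), Ω⁆ = 0 := by
  have hbsl : ∀ (c : ℂ) (X Y : A ⊗[ℂ] (A ⊗[ℂ] A)), ⁅c • X, Y⁆ = c • ⁅X, Y⁆ := fun c X Y => by
    rw [Ring.lie_def, Ring.lie_def, mul_smul_comm, smul_mul_assoc, smul_sub]
  have hbsr : ∀ (c : ℂ) (X Y : A ⊗[ℂ] (A ⊗[ℂ] A)), ⁅X, c • Y⁆ = c • ⁅X, Y⁆ := fun c X Y => by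
    rw [Ring.lie_def, Ring.lie_def, mul_smul_comm, smul_mul_assoc, smul_sub]
  have r1a : ⁅E1p, H1⁆ = -E1p := by rw [← lie_skew, t1a]
  have r1b : ⁅E1m, H1⁆ = E1m := by rw [← lie_skew, t1b, neg_neg]
  have r1c : ⁅E1m, E1p⁆ = -((2:ℂ) • H1) := by rw [← lie_skew, t1c]
  have r2a : ⁅E2p, H2⁆ = -E2p := by rw [← lie_skew, t2a]
  have r2b : ⁅E2m, H2⁆ = E2m := by rw [← lie_skew, t2b, neg_neg]
  have r2c : ⁅E2m, E2p⁆ = -((2:ℂ) • H2) := by rw [← lie_skew, t2c]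
  have rc0 : ⁅H2, H1⁆ = 0 := by rw [← lie_skew, c0, neg_zero]
  have rc1 : ⁅E2p, H1⁆ = 0 := by rw [← lie_skew, c1, neg_zero]
  have rc2 : ⁅E2m, H1⁆ = 0 := by rw [← lie_skew, c2, neg_zero]
  have rc3 : ⁅E1p, H2⁆ = 0 := by rw [← lie_skew, c3, neg_zero]
  have rc4 : ⁅E1m, H2⁆ = 0 := by rw [← lie_skew, c4, neg_zero]
  have rc5 : ⁅E2p, E1p⁆ = 0 := by rw [← lie_skew, c5, neg_zero]
  have rc6 : ⁅E2m, E1p⁆ = 0 := by rw [← lie_skew, c6, neg_zero]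
  have rc7 : ⁅E2p, E1m⁆ = 0 := by rw [← lie_skew, c7, neg_zero]
  have rc8 : ⁅E2m, E1m⁆ = 0 := by rw [← lie_skew, c8, neg_zero]
  have hι : ∀ u v : L, ⁅j u, j v⁆ = j ⁅u, v⁆ := fun u v => (j.map_lie u v).symm
  have hadd : ∀ u v : L, j (u + v) = j u + j v := fun u v => map_add j.toLinearMap u v
  have hsm : ∀ (s : ℂ) (v : L), j (s • v) = s • j v := fun s v => map_smul j.toLinearMap s v
  have hneg : ∀ v : L, j (-v) = -j v := fun v => map_neg j.toLinearMap v
  have hzero : j 0 = 0 := map_zero j.toLinearMap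
  set Δ : L → A ⊗[ℂ] (A ⊗[ℂ] A) := fun v =>
    j v ⊗ₜ[ℂ] ((1 : A) ⊗ₜ[ℂ] (1 : A)) + (1 : A) ⊗ₜ[ℂ] (j v ⊗ₜ[ℂ] (1 : A)) +
      (1 : A) ⊗ₜ[ℂ] ((1 : A) ⊗ₜ[ℂ] j v) with hΔdef
  have h1r : ∀ z : A, ⁅z, (1:A)⁆ = 0 := fun z => by simp [Ring.lie_def]
  have h1l : ∀ z : A, ⁅(1:A), z⁆ = 0 := fun z => by simp [Ring.lie_def]
  have hΔlie : ∀ u v : L, Δ ⁅u, v⁆ = ⁅Δ u, Δ v⁆ := by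
    intro u v
    simp only [hΔdef, lie_add, der3, hι, h1r, h1l, lie_self, hzero, zero_tmul, tmul_zero,
      add_zero, zero_add]
  have hΔadd : ∀ u v : L, Δ (u + v) = Δ u + Δ v := by
    intro u v
    simp only [hΔdef, hadd, add_tmul, tmul_add]
    abel
  have hΔsmul : ∀ (s : ℂ) (v : L), Δ (s • v) = s • Δ v := by
    intro s v
    simp only [hΔdef, hsm, smul_add, ← TensorProduct.smul_tmul', TensorProduct.tmul_smul]
  have hΔzero : Δ 0 = 0 := by
    have := hΔsmul 0 0; simpa using this
  have key : ∀ g ∈ ({H1, E1p, E1m, H2, E2p, E2m} : Set L), ⁅Δ g, Ω⁆ = 0 := by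
    intro g hg
    simp only [Set.mem_insert_iff, Set.mem_singleton_iff] at hg
    rcases hg with rfl | rfl | rfl | rfl | rfl | rfl <;>
    · rw [hΩ]
      simp only [hΔdef, lie_add, hbsr, lie_sub, der3, hι,
        t1a, t1b, t1c, t2a, t2b, t2c, c0, c1, c2, c3, c4, c5, c6, c7, c8,
        r1a, r1b, r1c, r2a, r2b, r2c, rc0, rc1, rc2, rc3, rc4, rc5, rc6, rc7, rc8,
        lie_self, hsm, hneg, hzero, zero_tmul, tmul_zero, neg_tmul, tmul_neg,
        ← TensorProduct.smul_tmul', TensorProduct.tmul_smul,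
        smul_zero, smul_neg, add_zero, zero_add, sub_zero, zero_sub]
      module
  let S : LieSubalgebra ℂ L :=
    { carrier := {v : L | ⁅Δ v, Ω⁆ = 0}
      add_mem' := fun {a b} ha hb => by
        simp only [Set.mem_setOf_eq] at *
        rw [hΔadd, add_lie, ha, hb, add_zero]
      zero_mem' := by simp only [Set.mem_setOf_eq, hΔzero, zero_lie]
      smul_mem' := fun s a ha => by
        simp only [Set.mem_setOf_eq] at *
        rw [hΔsmul, hbsl, ha, smul_zero]
      lie_mem' := fun {a b} ha hb => by
        simp only [Set.mem_setOf_eq] at *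
        rw [hΔlie, lie_lie, ha, hb, lie_zero, lie_zero, sub_zero] }
  have hle : LieSubalgebra.lieSpan ℂ L {H1, E1p, E1m, H2, E2p, E2m} ≤ S :=
    (LieSubalgebra.lieSpan_le).mpr key
  intro x hx
  exact hle hx

end sl2

/-- in `sl(2,ℂ) ⊕ sl(2,ℂ)`, the r-matrix
`r'₃ = 2(β+iα) E₁₊ ∧ E₁₋ + 2(β−iα) E₂₊ ∧ E₂₋` satisfies the modified CYBE: its
Yang–Baxter expression is an ad-invariant element of the third tensor power. -/
theorem sl2sl2_standard_r_matrix_mcybe {L : Type*} [LieRing L] [LieAlgebra ℂ L]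
    (H1 E1p E1m H2 E2p E2m : L)
    (t1a : ⁅H1, E1p⁆ = E1p) (t1b : ⁅H1, E1m⁆ = -E1m) (t1c : ⁅E1p, E1m⁆ = (2 : ℂ) • H1)
    (t2a : ⁅H2, E2p⁆ = E2p) (t2b : ⁅H2, E2m⁆ = -E2m) (t2c : ⁅E2p, E2m⁆ = (2 : ℂ) • H2)
    (c0 : ⁅H1, H2⁆ = 0) (c1 : ⁅H1, E2p⁆ = 0) (c2 : ⁅H1, E2m⁆ = 0)
    (c3 : ⁅H2, E1p⁆ = 0) (c4 : ⁅H2, E1m⁆ = 0)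
    (c5 : ⁅E1p, E2p⁆ = 0) (c6 : ⁅E1p, E2m⁆ = 0) (c7 : ⁅E1m, E2p⁆ = 0) (c8 : ⁅E1m, E2m⁆ = 0)
    (α β : ℂ) :
    let A := UniversalEnvelopingAlgebra ℂ L
    let ι : L → A := fun v => UniversalEnvelopingAlgebra.ι ℂ v
    let w : L → L → A ⊗[ℂ] A := fun a b => ι a ⊗ₜ[ℂ] ι b - ι b ⊗ₜ[ℂ] ι a
    let r : A ⊗[ℂ] A :=
      (2 * (β + Complex.I * α)) • w E1p E1m + (2 * (β - Complex.I * α)) • w E2p E2m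
    let E12 : (A ⊗[ℂ] A) →ₐ[ℂ] A ⊗[ℂ] (A ⊗[ℂ] A) :=
      Algebra.TensorProduct.map (AlgHom.id ℂ A) Algebra.TensorProduct.includeLeft
    let E13 : (A ⊗[ℂ] A) →ₐ[ℂ] A ⊗[ℂ] (A ⊗[ℂ] A) :=
      Algebra.TensorProduct.map (AlgHom.id ℂ A) Algebra.TensorProduct.includeRight
    let E23 : (A ⊗[ℂ] A) →ₐ[ℂ] A ⊗[ℂ] (A ⊗[ℂ] A) := Algebra.TensorProduct.includeRight
    -- the Yang–Baxter expression Ω of r'₃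
    let Ω : A ⊗[ℂ] (A ⊗[ℂ] A) := ⁅E12 r, E13 r⁆ + ⁅E12 r, E23 r⁆ + ⁅E13 r, E23 r⁆
    -- Ω is invariant: for all x in the Lie algebra generated by the six generators,
    -- [x⊗1⊗1 + 1⊗x⊗1 + 1⊗1⊗x, Ω] = 0
    ∀ x ∈ LieSubalgebra.lieSpan ℂ L {H1, E1p, E1m, H2, E2p, E2m},
      ⁅ι x ⊗ₜ[ℂ] ((1 : A) ⊗ₜ[ℂ] (1 : A)) + (1 : A) ⊗ₜ[ℂ] (ι x ⊗ₜ[ℂ] (1 : A)) +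
        (1 : A) ⊗ₜ[ℂ] ((1 : A) ⊗ₜ[ℂ] ι x), Ω⁆ = 0 := by
  intro A ι w r E12 E13 E23 Ω
  exact omega_invariant (UniversalEnvelopingAlgebra.ι ℂ) H1 E1p E1m H2 E2p E2m
    t1a t1b t1c t2a t2b t2c c0 c1 c2 c3 c4 c5 c6 c7 c8 α β Ω
    (omega_closed_form (UniversalEnvelopingAlgebra.ι ℂ) H1 E1p E1m H2 E2p E2m
      t1c t2c c5 c6 c7 c8 α β r rfl)
end

section
/- In the Poincaré algebra P(3,1), the elements h' = iM₃ and P₀ commute, [h', P₀] = 0, and hence the two-tensor r₁₃ = β₁ P₀ ∧ h' + α₁ P₀ ∧ P₃ + α₂ P₁ ∧ P₂ satisfies the homogeneous classical Yang–Baxter equation, using also [h', P₃] = 0, [h', P₁] = iP₂·i = −P₂-type relations ([M₃, P₁] = iP₂, [M₃, P₂] = −iP₁) and the mutual commutativity of the momenta. -/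
open scoped TensorProduct

/-- The Levi-Civita symbol on three indices. -/
def eps : Fin 3 → Fin 3 → Fin 3 → ℤ
  | 0, 1, 2 => 1
  | 1, 2, 0 => 1
  | 2, 0, 1 => 1
  | 1, 0, 2 => -1
  | 0, 2, 1 => -1
  | 2, 1, 0 => -1
  | _, _, _ => 0

section Aux

section
variable {A : Type*} [Ring A]

lemma add_lie' (x y z : A) : ⁅x + y, z⁆ = ⁅x, z⁆ + ⁅y, z⁆ := by
  simp only [Ring.lie_def, add_mul, mul_add]; abel

lemma lie_add' (x y z : A) : ⁅x, y + z⁆ = ⁅x, y⁆ + ⁅x, z⁆ := by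
  simp only [Ring.lie_def, add_mul, mul_add]; abel

lemma sub_lie' (x y z : A) : ⁅x - y, z⁆ = ⁅x, z⁆ - ⁅y, z⁆ := by
  simp only [Ring.lie_def, sub_mul, mul_sub]; abel

lemma lie_sub' (x y z : A) : ⁅x, y - z⁆ = ⁅x, y⁆ - ⁅x, z⁆ := by
  simp only [Ring.lie_def, sub_mul, mul_sub]; abel

end

variable {R : Type*} [CommRing R] {A : Type*} [Ring A] [Algebra R A]

lemma smul_lie' (c : R) (x z : A) : ⁅c • x, z⁆ = c • ⁅x, z⁆ := by
  simp only [Ring.lie_def, smul_mul_assoc, mul_smul_comm, smul_sub]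

lemma lie_smul' (c : R) (x z : A) : ⁅x, c • z⁆ = c • ⁅x, z⁆ := by
  simp only [Ring.lie_def, smul_mul_assoc, mul_smul_comm, smul_sub]

lemma comm12_13 (x y z w : A) :
    ⁅x ⊗ₜ[R] (y ⊗ₜ[R] (1 : A)), z ⊗ₜ[R] ((1 : A) ⊗ₜ[R] w)⁆
      = ⁅x, z⁆ ⊗ₜ[R] (y ⊗ₜ[R] w) := by
  simp [Ring.lie_def, Algebra.TensorProduct.tmul_mul_tmul, TensorProduct.sub_tmul]

lemma comm12_23 (x y z w : A) :
    ⁅x ⊗ₜ[R] (y ⊗ₜ[R] (1 : A)), (1 : A) ⊗ₜ[R] (z ⊗ₜ[R] w)⁆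
      = x ⊗ₜ[R] (⁅y, z⁆ ⊗ₜ[R] w) := by
  simp [Ring.lie_def, Algebra.TensorProduct.tmul_mul_tmul, TensorProduct.sub_tmul,
    TensorProduct.tmul_sub]

lemma comm13_23 (x y z w : A) :
    ⁅x ⊗ₜ[R] ((1 : A) ⊗ₜ[R] y), (1 : A) ⊗ₜ[R] (z ⊗ₜ[R] w)⁆
      = x ⊗ₜ[R] (z ⊗ₜ[R] ⁅y, w⁆) := by
  simp [Ring.lie_def, Algebra.TensorProduct.tmul_mul_tmul, TensorProduct.sub_tmul,
    TensorProduct.tmul_sub]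

end Aux

set_option maxHeartbeats 1600000 in
/-- in the Poincaré algebra, `h' = iM₃` and `P₀` commute, `[h',P₃] = 0`,
`[M₃,P₁] = iP₂`, `[M₃,P₂] = −iP₁`; hence
`r₁₃ = β₁ P₀ ∧ h' + α₁ P₀ ∧ P₃ + α₂ P₁ ∧ P₂` satisfies the homogeneous CYBE. -/
theorem poincare_r13_cybe {L : Type*} [LieRing L] [LieAlgebra ℂ L]
    (M N Pv : Fin 3 → L) (P0 : L)
    (hMM : ∀ i j, ⁅M i, M j⁆ = Complex.I • ∑ k, (eps i j k : ℂ) • M k)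
    (hMN : ∀ i j, ⁅M i, N j⁆ = Complex.I • ∑ k, (eps i j k : ℂ) • N k)
    (hNN : ∀ i j, ⁅N i, N j⁆ = -(Complex.I • ∑ k, (eps i j k : ℂ) • M k))
    (hMP : ∀ i j, ⁅M i, Pv j⁆ = Complex.I • ∑ k, (eps i j k : ℂ) • Pv k)
    (hMP0 : ∀ i, ⁅M i, P0⁆ = 0)
    (hNP : ∀ i j, ⁅N i, Pv j⁆ = if i = j then -(Complex.I • P0) else 0)
    (hNP0 : ∀ i, ⁅N i, P0⁆ = -(Complex.I • Pv i))
    (hPP : ∀ i j, ⁅Pv i, Pv j⁆ = 0)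
    (hP0P : ∀ i, ⁅P0, Pv i⁆ = 0)
    (β₁ α₁ α₂ : ℂ) :
    let h' : L := Complex.I • M 2
    let A := UniversalEnvelopingAlgebra ℂ L
    let ι : L → A := fun z => UniversalEnvelopingAlgebra.ι ℂ z
    let w : L → L → A ⊗[ℂ] A := fun a b => ι a ⊗ₜ[ℂ] ι b - ι b ⊗ₜ[ℂ] ι a
    let r : A ⊗[ℂ] A := β₁ • w P0 h' + α₁ • w P0 (Pv 2) + α₂ • w (Pv 0) (Pv 1)
    let E12 : (A ⊗[ℂ] A) →ₐ[ℂ] A ⊗[ℂ] (A ⊗[ℂ] A) :=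
      Algebra.TensorProduct.map (AlgHom.id ℂ A) Algebra.TensorProduct.includeLeft
    let E13 : (A ⊗[ℂ] A) →ₐ[ℂ] A ⊗[ℂ] (A ⊗[ℂ] A) :=
      Algebra.TensorProduct.map (AlgHom.id ℂ A) Algebra.TensorProduct.includeRight
    let E23 : (A ⊗[ℂ] A) →ₐ[ℂ] A ⊗[ℂ] (A ⊗[ℂ] A) := Algebra.TensorProduct.includeRight
    (⁅h', P0⁆ = 0 ∧ ⁅h', Pv 2⁆ = 0 ∧
     ⁅M 2, Pv 0⁆ = Complex.I • Pv 1 ∧ ⁅M 2, Pv 1⁆ = -(Complex.I • Pv 0)) ∧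
    ⁅E12 r, E13 r⁆ + ⁅E12 r, E23 r⁆ + ⁅E13 r, E23 r⁆ = 0 := by
  intro h' A ι w r E12 E13 E23
  -- elementary Lie bracket computations in L
  have e200 : ((eps 2 0 0 : ℤ) : ℂ) = 0 := by norm_num [show eps 2 0 0 = 0 from rfl]
  have e201 : ((eps 2 0 1 : ℤ) : ℂ) = 1 := by norm_num [eps]
  have e202 : ((eps 2 0 2 : ℤ) : ℂ) = 0 := by norm_num [show eps 2 0 2 = 0 from rfl]
  have e210 : ((eps 2 1 0 : ℤ) : ℂ) = -1 := by norm_num [eps]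
  have e211 : ((eps 2 1 1 : ℤ) : ℂ) = 0 := by norm_num [show eps 2 1 1 = 0 from rfl]
  have e212 : ((eps 2 1 2 : ℤ) : ℂ) = 0 := by norm_num [show eps 2 1 2 = 0 from rfl]
  have e22k : ∀ k, ((eps 2 2 k : ℤ) : ℂ) = 0 := by
    have : ∀ k, eps 2 2 k = 0 := by decide
    intro k; rw [this]; norm_num
  have hM2P0 : ⁅M 2, Pv 0⁆ = Complex.I • Pv 1 := by
    rw [hMP, Fin.sum_univ_three, e200, e201, e202]; simp
  have hM2P1 : ⁅M 2, Pv 1⁆ = -(Complex.I • Pv 0) := by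
    rw [hMP, Fin.sum_univ_three, e210, e211, e212]; simp
  have hM2P2 : ⁅M 2, Pv 2⁆ = 0 := by
    rw [hMP, Fin.sum_univ_three, e22k 0, e22k 1, e22k 2]; simp
  have hh'P0 : ⁅h', P0⁆ = 0 := by
    show ⁅Complex.I • M 2, P0⁆ = 0; rw [smul_lie, hMP0]; simp
  have hh'P2 : ⁅h', Pv 2⁆ = 0 := by
    show ⁅Complex.I • M 2, Pv 2⁆ = 0; rw [smul_lie, hM2P2]; simp
  have hh'c : ⁅h', Pv 0⁆ = -Pv 1 := by
    show ⁅Complex.I • M 2, Pv 0⁆ = -Pv 1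
    rw [smul_lie, hM2P0, smul_smul, Complex.I_mul_I, neg_one_smul]
  have hh'd : ⁅h', Pv 1⁆ = Pv 0 := by
    show ⁅Complex.I • M 2, Pv 1⁆ = Pv 0
    rw [smul_lie, hM2P1, smul_neg, smul_smul, Complex.I_mul_I, neg_one_smul, neg_neg]
  refine ⟨⟨hh'P0, hh'P2, hM2P0, hM2P1⟩, ?_⟩
  -- bracket computations at the level of the enveloping algebra
  have key : ∀ x y : L, ⁅(ι x : A), (ι y : A)⁆ = ι ⁅x, y⁆ := fun x y => by
    letI := LieRing.ofAssociativeRing (A := A); exact ((UniversalEnvelopingAlgebra.ι ℂ).map_lie x y).symm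
  have hP0h' : ⁅P0, h'⁆ = 0 := by rw [← neg_eq_zero, ← lie_skew, hh'P0]; simp
  have hP2h' : ⁅Pv 2, h'⁆ = 0 := by rw [← neg_eq_zero, ← lie_skew, hh'P2]; simp
  have hch' : ⁅Pv 0, h'⁆ = Pv 1 := by rw [← neg_inj, ← lie_skew, hh'c, neg_neg]
  have hdh' : ⁅Pv 1, h'⁆ = -Pv 0 := by rw [← neg_inj, ← lie_skew, hh'd]
  have hPP0 : ∀ i, ⁅Pv i, P0⁆ = 0 := fun i => by
    rw [← neg_eq_zero, ← lie_skew, hP0P]; simp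
  -- expand everything
  show ⁅E12 r, E13 r⁆ + ⁅E12 r, E23 r⁆ + ⁅E13 r, E23 r⁆ = 0
  have hr : r = β₁ • (ι P0 ⊗ₜ[ℂ] ι h' - ι h' ⊗ₜ[ℂ] ι P0)
      + α₁ • (ι P0 ⊗ₜ[ℂ] ι (Pv 2) - ι (Pv 2) ⊗ₜ[ℂ] ι P0)
      + α₂ • (ι (Pv 0) ⊗ₜ[ℂ] ι (Pv 1) - ι (Pv 1) ⊗ₜ[ℂ] ι (Pv 0)) := rfl
  have hE12 : ∀ x y : L, E12 (ι x ⊗ₜ[ℂ] ι y) = ι x ⊗ₜ[ℂ] (ι y ⊗ₜ[ℂ] (1 : A)) := by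
    intro x y
    show Algebra.TensorProduct.map (AlgHom.id ℂ A) Algebra.TensorProduct.includeLeft _ = _
    simp
  have hE13 : ∀ x y : L, E13 (ι x ⊗ₜ[ℂ] ι y) = ι x ⊗ₜ[ℂ] ((1 : A) ⊗ₜ[ℂ] ι y) := by
    intro x y
    show Algebra.TensorProduct.map (AlgHom.id ℂ A) Algebra.TensorProduct.includeRight _ = _
    simp
  have hE23 : ∀ x y : L, E23 (ι x ⊗ₜ[ℂ] ι y) = (1 : A) ⊗ₜ[ℂ] (ι x ⊗ₜ[ℂ] ι y) := by
    intro x y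
    show Algebra.TensorProduct.includeRight _ = _
    simp
  have aL : ∀ x y z : A ⊗[ℂ] (A ⊗[ℂ] A), ⁅x + y, z⁆ = ⁅x, z⁆ + ⁅y, z⁆ :=
    by intro x y z; simp only [Ring.lie_def, add_mul, mul_add]; abel
  have lA : ∀ x y z : A ⊗[ℂ] (A ⊗[ℂ] A), ⁅x, y + z⁆ = ⁅x, y⁆ + ⁅x, z⁆ :=
    by intro x y z; simp only [Ring.lie_def, add_mul, mul_add]; abel
  have sL : ∀ x y z : A ⊗[ℂ] (A ⊗[ℂ] A), ⁅x - y, z⁆ = ⁅x, z⁆ - ⁅y, z⁆ :=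
    by intro x y z; simp only [Ring.lie_def, sub_mul, mul_sub]; abel
  have lS : ∀ x y z : A ⊗[ℂ] (A ⊗[ℂ] A), ⁅x, y - z⁆ = ⁅x, y⁆ - ⁅x, z⁆ :=
    by intro x y z; simp only [Ring.lie_def, sub_mul, mul_sub]; abel
  have cL : ∀ (c : ℂ) (x z : A ⊗[ℂ] (A ⊗[ℂ] A)), ⁅c • x, z⁆ = c • ⁅x, z⁆ :=
    by intro c x z; simp only [Ring.lie_def, smul_mul_assoc, mul_smul_comm, smul_sub]
  have lC : ∀ (c : ℂ) (x z : A ⊗[ℂ] (A ⊗[ℂ] A)), ⁅x, c • z⁆ = c • ⁅x, z⁆ :=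
    by intro c x z; simp only [Ring.lie_def, smul_mul_assoc, mul_smul_comm, smul_sub]
  have c1213 : ∀ x y z w : A,
      ⁅x ⊗ₜ[ℂ] (y ⊗ₜ[ℂ] (1 : A)), z ⊗ₜ[ℂ] ((1 : A) ⊗ₜ[ℂ] w)⁆
        = ⁅x, z⁆ ⊗ₜ[ℂ] (y ⊗ₜ[ℂ] w) := by intro x y z w; simp [Ring.lie_def, Algebra.TensorProduct.tmul_mul_tmul, TensorProduct.sub_tmul]
  have c1223 : ∀ x y z w : A,
      ⁅x ⊗ₜ[ℂ] (y ⊗ₜ[ℂ] (1 : A)), (1 : A) ⊗ₜ[ℂ] (z ⊗ₜ[ℂ] w)⁆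
        = x ⊗ₜ[ℂ] (⁅y, z⁆ ⊗ₜ[ℂ] w) := by intro x y z w; simp [Ring.lie_def, Algebra.TensorProduct.tmul_mul_tmul, TensorProduct.sub_tmul, TensorProduct.tmul_sub]
  have c1323 : ∀ x y z w : A,
      ⁅x ⊗ₜ[ℂ] ((1 : A) ⊗ₜ[ℂ] y), (1 : A) ⊗ₜ[ℂ] (z ⊗ₜ[ℂ] w)⁆
        = x ⊗ₜ[ℂ] (z ⊗ₜ[ℂ] ⁅y, w⁆) := by intro x y z w; simp [Ring.lie_def, Algebra.TensorProduct.tmul_mul_tmul, TensorProduct.sub_tmul, TensorProduct.tmul_sub]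
  have i0 : (ι 0 : A) = 0 := by
    show (UniversalEnvelopingAlgebra.ι ℂ) (0 : L) = 0; letI := LieRing.ofAssociativeRing (A := A); exact (UniversalEnvelopingAlgebra.ι ℂ).toLinearMap.map_zero
  have ineg : ∀ x : L, (ι (-x) : A) = -ι x := by
    intro x; show (UniversalEnvelopingAlgebra.ι ℂ) (-x) = -(UniversalEnvelopingAlgebra.ι ℂ) x
    letI := LieRing.ofAssociativeRing (A := A); exact (UniversalEnvelopingAlgebra.ι ℂ).toLinearMap.map_neg x
  rw [hr]
  simp only [map_add, map_smul, map_sub, hE12, hE13, hE23]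
  simp only [aL, lA, sL, lS, cL, lC, c1213, c1223, c1323, key,
    hh'P0, hh'P2, hh'c, hh'd, hP0h', hP2h', hch', hdh', hMP0, hM2P0, hM2P1, hM2P2,
    hPP, hP0P, hPP0, lie_self, i0, ineg, map_neg, map_zero,
    TensorProduct.zero_tmul, TensorProduct.tmul_zero,
    TensorProduct.neg_tmul, TensorProduct.tmul_neg,
    smul_zero, smul_neg, sub_zero, zero_sub, add_zero, zero_add, neg_neg, neg_zero]
  module
end

section
/- Let b be the Lie algebra with [h, e] = e and consider the Jordanian twist F = exp(2h ⊗ σ), σ = ½ log(1 + ξe), in U(b)⊗U(b)[[ξ]]. The twisted coproduct Δ^F(x) = FΔ(x)F^{−1} satisfies Δ^F(e) = e ⊗ e^{2σ} + 1 ⊗ e, equivalently Δ^F(e^{2σ}) = e^{2σ} ⊗ e^{2σ}, where e^{2σ} = 1 + ξe. -/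
open scoped TensorProduct

noncomputable def expPS {A : Type*} [Ring A] [Algebra ℚ A] (X : PowerSeries A) :
    PowerSeries A :=
  PowerSeries.mk fun m =>
    ∑ n ∈ Finset.range (m + 1), ((n.factorial : ℚ)⁻¹) • (PowerSeries.coeff m) (X ^ n)

set_option linter.unusedSectionVars false
set_option maxHeartbeats 1000000

namespace JTaux

open PowerSeries

variable {R : Type*} [Ring R] [Algebra ℚ R]

theorem coeff_pow_zero {X : PowerSeries R} (hX : constantCoeff X = 0) :
    ∀ n m : ℕ, m < n → coeff m (X ^ n) = 0 := by
  intro n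
  induction n with
  | zero => intro m hm; omega
  | succ n ih =>
    intro m hm
    rw [pow_succ, coeff_mul]
    apply Finset.sum_eq_zero
    rintro ⟨i, j⟩ hij
    rw [Finset.HasAntidiagonal.mem_antidiagonal] at hij
    rcases Nat.eq_zero_or_pos j with hj | hj
    · subst hj
      simp only [coeff_zero_eq_constantCoeff, hX, mul_zero]
    · rw [ih i (by omega), zero_mul]

theorem coeff_mul_pow_zero {X Y : PowerSeries R} (hX : constantCoeff X = 0)
    (hY : constantCoeff Y = 0) {a b m : ℕ} (hab : m < a + b) :
    coeff m (X ^ a * Y ^ b) = 0 := by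
  rw [coeff_mul]
  apply Finset.sum_eq_zero
  rintro ⟨i, j⟩ hij
  rw [Finset.HasAntidiagonal.mem_antidiagonal] at hij
  rcases lt_or_ge i a with hi | hi
  · rw [coeff_pow_zero hX a i hi, zero_mul]
  · rw [coeff_pow_zero hY b j (by omega), mul_zero]

theorem coeff_expPS_trunc {X : PowerSeries R} (hX : constantCoeff X = 0)
    {m M : ℕ} (hmM : m ≤ M) :
    coeff m (expPS X) =
      coeff m (∑ n ∈ Finset.range (M + 1), ((n.factorial : ℚ)⁻¹) • X ^ n) := by
  rw [expPS, coeff_mk, map_sum]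
  simp only [coeff_smul]
  apply Finset.sum_subset
  · intro x hx
    simp only [Finset.mem_range] at hx ⊢; omega
  · intro x _ hx
    simp only [Finset.mem_range, not_lt] at hx
    rw [coeff_pow_zero hX x m (by omega), smul_zero]

theorem coeff_mul_congr2 {P P' q q' : PowerSeries R} (m : ℕ)
    (h : ∀ i, i ≤ m → coeff i P = coeff i P')
    (h' : ∀ i, i ≤ m → coeff i q = coeff i q') :
    coeff m (P * q) = coeff m (P' * q') := by
  rw [coeff_mul, coeff_mul]
  apply Finset.sum_congr rfl
  rintro ⟨i, j⟩ hij
  rw [Finset.HasAntidiagonal.mem_antidiagonal] at hij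
  rw [h i (by omega), h' j (by omega)]

theorem expPS_zero : expPS (0 : PowerSeries R) = 1 := by
  ext m
  rw [expPS, coeff_mk, Finset.sum_eq_single 0]
  · simp
  · intro n _ hn
    rw [zero_pow hn, map_zero, smul_zero]
  · simp

theorem expPS_add {X Y : PowerSeries R} (hX : constantCoeff X = 0)
    (hY : constantCoeff Y = 0) (hc : Commute X Y) :
    expPS (X + Y) = expPS X * expPS Y := by
  ext m
  have hXY : constantCoeff (X + Y) = 0 := by rw [map_add, hX, hY, add_zero]
  set f : ℕ → ℕ → R := fun a b =>
    ((a.factorial : ℚ)⁻¹ * (b.factorial : ℚ)⁻¹) • coeff m (X ^ a * Y ^ b) with hf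
  have hrhs : coeff m (expPS X * expPS Y) =
      ∑ a ∈ Finset.range (m + 1), ∑ b ∈ Finset.range (m + 1), f a b := by
    have h1 : coeff m (expPS X * expPS Y) =
        coeff m ((∑ n ∈ Finset.range (m + 1), ((n.factorial : ℚ)⁻¹) • X ^ n) *
          (∑ n ∈ Finset.range (m + 1), ((n.factorial : ℚ)⁻¹) • Y ^ n)) := by
      apply coeff_mul_congr2
      · intro i hi; exact coeff_expPS_trunc hX hi
      · intro i hi; exact coeff_expPS_trunc hY hi
    rw [h1, Finset.sum_mul_sum]
    simp only [smul_mul_smul_comm, map_sum, coeff_smul, hf]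
  have hlhs : coeff m (expPS (X + Y)) =
      ∑ n ∈ Finset.range (m + 1), ∑ k ∈ Finset.range (n + 1), f k (n - k) := by
    rw [coeff_expPS_trunc hXY (le_refl m), map_sum]
    simp only [coeff_smul]
    apply Finset.sum_congr rfl
    intro n _
    rw [hc.add_pow, map_sum, Finset.smul_sum]
    apply Finset.sum_congr rfl
    intro k hk
    rw [Finset.mem_range] at hk
    have hcomm : X ^ k * Y ^ (n - k) * (n.choose k : R⟦X⟧) =
        (n.choose k : ℚ) • (X ^ k * Y ^ (n - k)) := by
      rw [(Nat.commute_cast (X ^ k * Y ^ (n - k)) (n.choose k)).eq, ← nsmul_eq_mul,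
        ← Nat.cast_smul_eq_nsmul ℚ]
    rw [hcomm, coeff_smul, smul_smul]
    simp only [hf]
    congr 1
    have h2 : (n.choose k : ℚ) * k.factorial * (n - k).factorial = n.factorial := by
      exact_mod_cast Nat.choose_mul_factorial_mul_factorial (by omega : k ≤ n)
    have hk0 : (k.factorial : ℚ) ≠ 0 := Nat.cast_ne_zero.mpr k.factorial_ne_zero
    have hnk0 : ((n - k).factorial : ℚ) ≠ 0 := Nat.cast_ne_zero.mpr (n - k).factorial_ne_zero
    have hn0 : (n.factorial : ℚ) ≠ 0 := Nat.cast_ne_zero.mpr n.factorial_ne_zero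
    field_simp
    linarith [h2]
  rw [hlhs, hrhs]
  have hvanish : ∀ a b : ℕ, m < a + b → f a b = 0 := by
    intro a b hab
    simp only [hf]
    rw [coeff_mul_pow_zero hX hY hab, smul_zero]
  rw [← Finset.sum_product']
  rw [← Finset.sum_filter_of_ne (p := fun p : ℕ × ℕ => p.1 + p.2 ≤ m)
    (fun p _ hp => by by_contra hc2; exact hp (hvanish p.1 p.2 (by omega)))]
  rw [Finset.sum_sigma']
  apply Finset.sum_nbij' (i := fun p : (_ : ℕ) × ℕ => (p.2, p.1 - p.2))
    (j := fun p : ℕ × ℕ => ⟨p.1 + p.2, p.1⟩)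
  · rintro ⟨n, k⟩ hnk
    simp only [Finset.mem_sigma, Finset.mem_range] at hnk
    simp only [Finset.mem_filter, Finset.mem_product, Finset.mem_range]
    omega
  · rintro ⟨a, b⟩ hab
    simp only [Finset.mem_filter, Finset.mem_product, Finset.mem_range] at hab
    simp only [Finset.mem_sigma, Finset.mem_range]
    omega
  · rintro ⟨n, k⟩ hnk
    simp only [Finset.mem_sigma, Finset.mem_range] at hnk
    simp only [Sigma.mk.inj_iff]
    constructor
    · omega
    · exact heq_of_eq rfl
  · rintro ⟨a, b⟩ hab
    simp
  · rintro ⟨n, k⟩ hnk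
    rfl

/-- intertwining through a constant. -/
theorem expPS_mul_C {X Y : PowerSeries R} {c : R}
    (hn : ∀ n : ℕ, X ^ n * C c = C c * Y ^ n) :
    expPS X * C c = C c * expPS Y := by
  ext m
  rw [coeff_mul_C, coeff_C_mul, expPS, expPS, coeff_mk, coeff_mk, Finset.sum_mul,
    Finset.mul_sum]
  apply Finset.sum_congr rfl
  intro n _
  rw [smul_mul_assoc, mul_smul_comm, ← coeff_mul_C, ← coeff_C_mul, hn n]

theorem expPS_comm_C {X : PowerSeries R} {c : R} (hc : Commute X (C c)) :
    expPS X * C c = C c * expPS X :=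
  expPS_mul_C fun n => (hc.pow_left n).eq

/-- expPS commutes with ring maps that are ℚ-algebra maps. -/
theorem map_expPS {S : Type*} [Ring S] [Algebra ℚ S] (g : R →ₐ[ℚ] S) (X : PowerSeries R) :
    PowerSeries.map g.toRingHom (expPS X) = expPS (PowerSeries.map g.toRingHom X) := by
  ext m
  rw [coeff_map, expPS, expPS, coeff_mk, coeff_mk, map_sum]
  apply Finset.sum_congr rfl
  intro n _
  rw [show g.toRingHom ((n.factorial : ℚ)⁻¹ • coeff m (X ^ n)) =
    (n.factorial : ℚ)⁻¹ • g.toRingHom (coeff m (X ^ n)) from map_smul g _ _,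
    ← coeff_map, ← map_pow]

theorem commute_of_coeff_commute {P Q : PowerSeries R}
    (h : ∀ i j : ℕ, Commute (coeff i P) (coeff j Q)) : Commute P Q := by
  show P * Q = Q * P
  ext m
  rw [coeff_mul, coeff_mul, ← Finset.Nat.sum_antidiagonal_swap]
  apply Finset.sum_congr rfl
  rintro ⟨i, j⟩ _
  exact (h j i).eq

noncomputable def lam : PowerSeries ℚ :=
  PowerSeries.mk fun m => if m = 0 then 0 else ((-1 : ℚ) ^ (m + 1)) / m

theorem constantCoeff_lam : constantCoeff lam = 0 := by
  rw [← coeff_zero_eq_constantCoeff, lam, coeff_mk, if_pos rfl]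

theorem derivative_lam_mul : d⁄dX ℚ lam * (1 + X) = 1 := by
  ext m
  rw [mul_add, mul_one, map_add]
  have hd : ∀ n : ℕ, coeff n (d⁄dX ℚ lam) = (-1 : ℚ) ^ n := by
    intro n
    rw [coeff_derivative, lam, coeff_mk, if_neg (Nat.succ_ne_zero n)]
    field_simp
    push_cast
    ring
  cases m with
  | zero =>
    rw [coeff_zero_eq_constantCoeff, map_mul, constantCoeff_X, mul_zero, add_zero,
      ← coeff_zero_eq_constantCoeff, hd 0]
    norm_num
  | succ m =>
    rw [coeff_succ_mul_X, hd, hd, coeff_one, if_neg (Nat.succ_ne_zero m), pow_succ]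
    ring

theorem derivative_expPS {S : Type*} [CommRing S] [Algebra ℚ S] {u : PowerSeries S}
    (hu : constantCoeff u = 0) :
    d⁄dX S (expPS u) = expPS u * d⁄dX S u := by
  ext m
  rw [coeff_derivative, coeff_expPS_trunc hu (Nat.le_refl (m + 1)), ← coeff_derivative]
  have step : d⁄dX S (∑ n ∈ Finset.range (m + 1 + 1), (n.factorial : ℚ)⁻¹ • u ^ n)
      = ∑ k ∈ Finset.range (m + 1), ((k.factorial : ℚ)⁻¹ • (u ^ k * d⁄dX S u)) := by
    rw [map_sum]
    have e1 : ∀ n ∈ Finset.range (m + 2), d⁄dX S ((n.factorial : ℚ)⁻¹ • u ^ n)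
        = (n.factorial : ℚ)⁻¹ • (n • (u ^ (n - 1) • d⁄dX S u)) := by
      intro n _
      rw [Derivation.map_smul_of_tower, Derivation.leibniz_pow]
    rw [Finset.sum_congr rfl e1, Finset.sum_range_succ']
    simp only [zero_smul, smul_zero, add_zero]
    apply Finset.sum_congr rfl
    intro k _
    rw [Nat.add_sub_cancel, ← Nat.cast_smul_eq_nsmul ℚ, smul_smul, smul_eq_mul]
    congr 1
    rw [Nat.factorial_succ]
    push_cast
    have hk0 : (k.factorial : ℚ) ≠ 0 := Nat.cast_ne_zero.mpr k.factorial_ne_zero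
    field_simp
  rw [step]
  have rhs : coeff m (expPS u * d⁄dX S u) =
      coeff m ((∑ k ∈ Finset.range (m + 1), (k.factorial : ℚ)⁻¹ • u ^ k) * d⁄dX S u) := by
    exact coeff_mul_congr2 m (fun i hi => coeff_expPS_trunc hu hi) (fun i _ => rfl)
  rw [rhs, Finset.sum_mul]
  apply congrArg
  apply Finset.sum_congr rfl
  intro k _
  rw [smul_mul_assoc]

theorem constantCoeff_expPS (X : PowerSeries R) :
    constantCoeff (expPS X) = 1 := by
  rw [← coeff_zero_eq_constantCoeff, expPS, coeff_mk]
  rw [Finset.sum_range_succ]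
  simp [coeff_zero_eq_constantCoeff]

theorem expPS_lam : expPS lam = 1 + X := by
  have hcc1X : constantCoeff (1 + X : PowerSeries ℚ) = 1 := by
    rw [map_add, map_one, constantCoeff_X, add_zero]
  have hmi : (1 + X : PowerSeries ℚ) * (1 + X)⁻¹ = 1 :=
    PowerSeries.mul_inv_cancel _ (by rw [hcc1X]; norm_num)
  have hdl : d⁄dX ℚ lam = (1 + X)⁻¹ := by
    calc d⁄dX ℚ lam = d⁄dX ℚ lam * ((1 + X) * (1 + X)⁻¹) := by rw [hmi, mul_one]
    _ = (d⁄dX ℚ lam * (1 + X)) * (1 + X)⁻¹ := by ring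
    _ = (1 + X)⁻¹ := by rw [derivative_lam_mul, one_mul]
  set f := expPS lam with hfdef
  have hdf : d⁄dX ℚ f = f * (1 + X)⁻¹ := by
    rw [hfdef, derivative_expPS constantCoeff_lam, hdl]
  have hp : f * (1 + X)⁻¹ = 1 := by
    apply derivative.ext
    · have hd1 : d⁄dX ℚ (1 : PowerSeries ℚ) = 0 := (d⁄dX ℚ).map_one_eq_zero
      have hd1X : d⁄dX ℚ (1 + X : PowerSeries ℚ) = 1 := by
        rw [map_add, derivative_X, hd1, zero_add]
      rw [Derivation.leibniz, smul_eq_mul, smul_eq_mul, derivative_inv' (1 + X), hdf, hd1X, hd1]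
      ring
    · rw [map_mul, map_one, constantCoeff_inv, hcc1X, constantCoeff_expPS]
      norm_num
  calc f = f * ((1 + X) * (1 + X)⁻¹) := by rw [hmi, mul_one]
  _ = (f * (1 + X)⁻¹) * (1 + X) := by ring
  _ = 1 + X := by rw [hp, one_mul]

variable {A : Type*} [Ring A] [Algebra ℚ A]

/-- substitution t ↦ ξ e -/
noncomputable def phi (e : A) : PowerSeries ℚ →+* PowerSeries A where
  toFun p := PowerSeries.mk fun m => (PowerSeries.coeff m p) • e ^ m
  map_one' := by
    ext m
    rw [coeff_mk, coeff_one]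
    cases m with
    | zero => simp
    | succ m => simp [coeff_one]
  map_mul' p q := by
    ext m
    rw [coeff_mk, coeff_mul, coeff_mul, Finset.sum_smul]
    apply Finset.sum_congr rfl
    rintro ⟨i, j⟩ hij
    rw [Finset.HasAntidiagonal.mem_antidiagonal] at hij
    rw [coeff_mk, coeff_mk, smul_mul_smul_comm, ← pow_add, hij]
  map_zero' := by
    ext m; simp
  map_add' p q := by
    ext m
    rw [coeff_mk, map_add, map_add, coeff_mk, coeff_mk, add_smul]

theorem coeff_phi (e : A) (p : PowerSeries ℚ) (m : ℕ) :
    coeff m (phi e p) = (coeff m p) • e ^ m := by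
  simp only [phi, RingHom.coe_mk, MonoidHom.coe_mk, OneHom.coe_mk, coeff_mk]

theorem phi_expPS (e : A) (p : PowerSeries ℚ) : phi e (expPS p) = expPS (phi e p) := by
  ext m
  rw [coeff_phi, expPS, expPS, coeff_mk, coeff_mk, Finset.sum_smul]
  apply Finset.sum_congr rfl
  intro n _
  rw [← map_pow, coeff_phi, smul_assoc]

end JTaux

open JTaux

/-- for the Jordanian twist `F = exp(2h⊗σ)`, `σ = ½log(1+ξe)`, the twisted
coproduct satisfies `Δ^F(e) = e ⊗ e^{2σ} + 1 ⊗ e` and `Δ^F(e^{2σ}) = e^{2σ} ⊗ e^{2σ}`,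
where `e^{2σ} = 1 + ξe`. -/
theorem jordanian_twisted_coproduct {A : Type*} [Ring A] [Algebra ℚ A]
    (h e : A) (hhe : h * e - e * h = e)
    (Δ : A →ₐ[ℚ] A ⊗[ℚ] A)
    (hΔh : Δ h = h ⊗ₜ[ℚ] (1 : A) + (1 : A) ⊗ₜ[ℚ] h)
    (hΔe : Δ e = e ⊗ₜ[ℚ] (1 : A) + (1 : A) ⊗ₜ[ℚ] e) :
    let σ : PowerSeries A :=
      PowerSeries.mk fun m => if m = 0 then 0 else (((-1 : ℚ) ^ (m + 1)) / (2 * m)) • e ^ m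
    let XX : PowerSeries (A ⊗[ℚ] A) :=
      PowerSeries.mk fun m => (2 : ℚ) • (h ⊗ₜ[ℚ] (PowerSeries.coeff m σ))
    let F : PowerSeries (A ⊗[ℚ] A) := expPS XX
    -- e^{2σ} = 1 + ξe in A[[ξ]]
    let Q : PowerSeries A := PowerSeries.C 1 + PowerSeries.X * PowerSeries.C e
    -- e ⊗ e^{2σ} + 1 ⊗ e
    let De : PowerSeries (A ⊗[ℚ] A) :=
      PowerSeries.C (e ⊗ₜ[ℚ] (1 : A)) + PowerSeries.X * PowerSeries.C (e ⊗ₜ[ℚ] e) +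
        PowerSeries.C ((1 : A) ⊗ₜ[ℚ] e)
    -- e^{2σ} ⊗ e^{2σ} = (1+ξe) ⊗ (1+ξe)
    let QQ : PowerSeries (A ⊗[ℚ] A) :=
      PowerSeries.C ((1 : A) ⊗ₜ[ℚ] (1 : A)) +
        PowerSeries.X * PowerSeries.C (e ⊗ₜ[ℚ] (1 : A) + (1 : A) ⊗ₜ[ℚ] e) +
        PowerSeries.X ^ 2 * PowerSeries.C (e ⊗ₜ[ℚ] e)
    -- e^{2σ} = 1 + ξe
    expPS (PowerSeries.mk fun m => (2 : ℚ) • PowerSeries.coeff m σ) = Q ∧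
    IsUnit F ∧
    F * PowerSeries.C (Δ e) * Ring.inverse F = De ∧
    F * PowerSeries.map Δ.toRingHom Q * Ring.inverse F = QQ := by
  intro σ XX F Q De QQ
  open PowerSeries in
  have hσdef : σ = PowerSeries.mk
      fun m => if m = 0 then 0 else (((-1 : ℚ) ^ (m + 1)) / (2 * m)) • e ^ m := rfl
  have hXXdef : XX = PowerSeries.mk
      fun m => (2 : ℚ) • (h ⊗ₜ[ℚ] (PowerSeries.coeff m σ)) := rfl
  have hFdef : F = expPS XX := rfl
  have hQdef : Q = PowerSeries.C 1 + PowerSeries.X * PowerSeries.C e := rfl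
  have hDedef : De = PowerSeries.C (e ⊗ₜ[ℚ] (1 : A)) +
      PowerSeries.X * PowerSeries.C (e ⊗ₜ[ℚ] e) +
      PowerSeries.C ((1 : A) ⊗ₜ[ℚ] e) := rfl
  have hQQdef : QQ = PowerSeries.C ((1 : A) ⊗ₜ[ℚ] (1 : A)) +
      PowerSeries.X * PowerSeries.C (e ⊗ₜ[ℚ] (1 : A) + (1 : A) ⊗ₜ[ℚ] e) +
      PowerSeries.X ^ 2 * PowerSeries.C (e ⊗ₜ[ℚ] e) := rfl
  clear hΔh
  -- coefficients of σ
  have hσc : ∀ m : ℕ, PowerSeries.coeff m σ =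
      if m = 0 then 0 else (((-1 : ℚ) ^ (m + 1)) / (2 * m)) • e ^ m := by
    intro m; rw [hσdef, PowerSeries.coeff_mk]
  have hσq : ∀ m : ℕ, ∃ q : ℚ, PowerSeries.coeff m σ = q • e ^ m := by
    intro m
    rw [hσc]
    by_cases hm : m = 0
    · exact ⟨0, by rw [if_pos hm, zero_smul]⟩
    · exact ⟨_, by rw [if_neg hm]⟩
  have hce : ∀ m : ℕ, Commute e (PowerSeries.coeff m σ) := by
    intro m
    obtain ⟨q, hq⟩ := hσq m
    rw [hq]
    exact ((Commute.refl e).pow_right m).smul_right q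
  have hcσσ : ∀ i j : ℕ, Commute (PowerSeries.coeff i σ) (PowerSeries.coeff j σ) := by
    intro i j
    obtain ⟨q, hq⟩ := hσq i; obtain ⟨r, hr⟩ := hσq j
    rw [hq, hr]
    exact (((Commute.refl e).pow_pow i j).smul_left q).smul_right r
  -- Step A : the 2σ series is phi e lam
  have hA : (PowerSeries.mk fun m => (2 : ℚ) • PowerSeries.coeff m σ) = phi e lam := by
    ext m
    rw [PowerSeries.coeff_mk, coeff_phi, hσc, lam, PowerSeries.coeff_mk]
    cases m with
    | zero => simp
    | succ m =>
      rw [if_neg (Nat.succ_ne_zero m), if_neg (Nat.succ_ne_zero m), smul_smul]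
      congr 1
      have hm0 : ((m + 1 : ℕ) : ℚ) ≠ 0 := by exact_mod_cast Nat.succ_ne_zero m
      push_cast
      field_simp
  -- phi e (1 + X) = 1 + X * C e
  have hphiX : phi e (PowerSeries.X : PowerSeries ℚ) =
      PowerSeries.X * PowerSeries.C e := by
    ext m
    rw [coeff_phi, PowerSeries.coeff_mul_C, PowerSeries.coeff_X, PowerSeries.coeff_X]
    by_cases hm : m = 1
    · subst hm; simp
    · rw [if_neg hm, if_neg hm, zero_smul, zero_mul]
  have hphi1X : phi e ((1 : PowerSeries ℚ) + PowerSeries.X) =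
      1 + PowerSeries.X * PowerSeries.C e := by
    rw [map_add, map_one, hphiX]
  -- claim 1
  have hcl1 : expPS (PowerSeries.mk fun m => (2 : ℚ) • PowerSeries.coeff m σ) = Q := by
    rw [hA, ← phi_expPS, expPS_lam, hphi1X, hQdef, map_one]
  -- B side
  set ι₂ : A →ₐ[ℚ] A ⊗[ℚ] A := Algebra.TensorProduct.includeRight with hι
  set Sp : PowerSeries (A ⊗[ℚ] A) := PowerSeries.map ι₂.toRingHom (phi e lam) with hSpdef
  have cXX : ∀ m : ℕ, PowerSeries.coeff m XX =
      (2 : ℚ) • (h ⊗ₜ[ℚ] PowerSeries.coeff m σ) := by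
    intro m; rw [hXXdef, PowerSeries.coeff_mk]
  have cSp : ∀ m : ℕ, PowerSeries.coeff m Sp =
      (2 : ℚ) • ((1 : A) ⊗ₜ[ℚ] PowerSeries.coeff m σ) := by
    intro m
    rw [hSpdef, PowerSeries.coeff_map, ← hA, PowerSeries.coeff_mk]
    rw [show ι₂.toRingHom ((2 : ℚ) • PowerSeries.coeff m σ) =
      (2 : ℚ) • ι₂ (PowerSeries.coeff m σ) from map_smul ι₂ _ _,
      Algebra.TensorProduct.includeRight_apply]
  have ccXX : PowerSeries.constantCoeff XX = 0 := by
    rw [← PowerSeries.coeff_zero_eq_constantCoeff, cXX 0, hσc 0, if_pos rfl,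
      TensorProduct.tmul_zero, smul_zero]
  have ccSp : PowerSeries.constantCoeff Sp = 0 := by
    rw [← PowerSeries.coeff_zero_eq_constantCoeff, cSp 0, hσc 0, if_pos rfl,
      TensorProduct.tmul_zero, smul_zero]
  have commXXSp : Commute XX Sp := by
    apply commute_of_coeff_commute
    intro i j
    rw [cXX, cSp]
    have base : Commute (h ⊗ₜ[ℚ] PowerSeries.coeff i σ)
        ((1 : A) ⊗ₜ[ℚ] PowerSeries.coeff j σ) := by
      show _ = _
      rw [Algebra.TensorProduct.tmul_mul_tmul, Algebra.TensorProduct.tmul_mul_tmul,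
        mul_one, one_mul, (hcσσ i j).eq]
    exact (base.smul_left (2 : ℚ)).smul_right (2 : ℚ)
  have commXXC : Commute XX (PowerSeries.C ((1 : A) ⊗ₜ[ℚ] e)) := by
    apply commute_of_coeff_commute
    intro i j
    rw [cXX, PowerSeries.coeff_C]
    by_cases hj : j = 0
    · rw [if_pos hj]
      have base : Commute (h ⊗ₜ[ℚ] PowerSeries.coeff i σ) ((1 : A) ⊗ₜ[ℚ] e) := by
        show _ = _
        rw [Algebra.TensorProduct.tmul_mul_tmul, Algebra.TensorProduct.tmul_mul_tmul,
          mul_one, one_mul, (hce i).symm.eq]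
      exact base.smul_left (2 : ℚ)
    · rw [if_neg hj]; exact Commute.zero_right _
  -- the key relation at coefficient level, lifted
  have hhe2 : h * e = e * h + e := by rw [add_comm]; exact sub_eq_iff_eq_add.mp hhe
  have R2s : XX * PowerSeries.C (e ⊗ₜ[ℚ] (1 : A)) =
      PowerSeries.C (e ⊗ₜ[ℚ] (1 : A)) * (XX + Sp) := by
    ext m
    rw [PowerSeries.coeff_mul_C, PowerSeries.coeff_C_mul, map_add, cXX, cSp]
    simp only [smul_mul_assoc, mul_smul_comm, mul_add, Algebra.TensorProduct.tmul_mul_tmul,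
      mul_one, one_mul]
    rw [hhe2, TensorProduct.add_tmul, smul_add]
  have powR2 : ∀ n : ℕ, XX ^ n * PowerSeries.C (e ⊗ₜ[ℚ] (1 : A)) =
      PowerSeries.C (e ⊗ₜ[ℚ] (1 : A)) * (XX + Sp) ^ n := by
    intro n
    induction n with
    | zero => simp
    | succ n ih =>
      rw [pow_succ, pow_succ, mul_assoc, R2s, ← mul_assoc, ih, mul_assoc]
  have conj1 : F * PowerSeries.C (e ⊗ₜ[ℚ] (1 : A)) =
      PowerSeries.C (e ⊗ₜ[ℚ] (1 : A)) * expPS (XX + Sp) := by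
    rw [hFdef]; exact expPS_mul_C powR2
  have hsplit : expPS (XX + Sp) = expPS Sp * F := by
    rw [hFdef, show XX + Sp = Sp + XX from add_comm _ _]
    exact expPS_add ccSp ccXX commXXSp.symm
  have expSp : expPS Sp = 1 + PowerSeries.X * PowerSeries.C ((1 : A) ⊗ₜ[ℚ] e) := by
    rw [hSpdef, ← map_expPS, ← phi_expPS, expPS_lam, hphi1X, map_add, map_one, map_mul,
      PowerSeries.map_X, PowerSeries.map_C]
    rw [show ι₂.toRingHom e = (1 : A) ⊗ₜ[ℚ] e from Algebra.TensorProduct.includeRight_apply e]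
  -- inverse
  set G : PowerSeries (A ⊗[ℚ] A) := expPS (-XX) with hGdef
  have ccN : PowerSeries.constantCoeff (-XX) = 0 := by rw [map_neg, ccXX, neg_zero]
  have hFG : F * G = 1 := by
    rw [hFdef, hGdef, ← expPS_add ccXX ccN (Commute.neg_right (Commute.refl XX)),
      add_neg_cancel, expPS_zero]
  have hGF : G * F = 1 := by
    rw [hFdef, hGdef, ← expPS_add ccN ccXX (Commute.neg_left (Commute.refl XX)),
      neg_add_cancel, expPS_zero]
  have hU : IsUnit F := ⟨⟨F, G, hFG, hGF⟩, rfl⟩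
  have hinv : Ring.inverse F = G := Ring.inverse_unit ⟨F, G, hFG, hGF⟩
  -- conjugation of e ⊗ 1
  have key : F * PowerSeries.C (e ⊗ₜ[ℚ] (1 : A)) =
      (PowerSeries.C (e ⊗ₜ[ℚ] (1 : A)) +
        PowerSeries.X * PowerSeries.C (e ⊗ₜ[ℚ] e)) * F := by
    rw [conj1, hsplit, ← mul_assoc, expSp]
    congr 1
    rw [mul_add, mul_one, ← mul_assoc, (PowerSeries.commute_X _).eq, mul_assoc, ← map_mul,
      Algebra.TensorProduct.tmul_mul_tmul, mul_one, one_mul]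
  have hconj2 : F * PowerSeries.C ((1 : A) ⊗ₜ[ℚ] e) =
      PowerSeries.C ((1 : A) ⊗ₜ[ℚ] e) * F := by
    rw [hFdef]; exact expPS_comm_C commXXC
  have hDeF : F * PowerSeries.C (Δ e) = De * F := by
    rw [hΔe, map_add, mul_add, key, hconj2, hDedef, add_mul, add_mul, add_mul]
  have hcl3 : F * PowerSeries.C (Δ e) * Ring.inverse F = De := by
    rw [hinv, hDeF, mul_assoc, hFG, mul_one]
  -- claim 4
  have hmapQ : PowerSeries.map Δ.toRingHom Q =
      1 + PowerSeries.X * PowerSeries.C (Δ e) := by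
    rw [hQdef, map_add, map_mul, PowerSeries.map_X, PowerSeries.map_C, PowerSeries.map_C]
    rw [show Δ.toRingHom (1 : A) = 1 from map_one _, map_one]
    rfl
  have hcl4 : F * PowerSeries.map Δ.toRingHom Q * Ring.inverse F = QQ := by
    rw [hmapQ, hinv]
    have h1 : F * (1 + PowerSeries.X * PowerSeries.C (Δ e)) =
        (1 + PowerSeries.X * De) * F := by
      rw [mul_add, mul_one, add_mul, one_mul]
      congr 1
      calc F * (PowerSeries.X * PowerSeries.C (Δ e))
          = (F * PowerSeries.X) * PowerSeries.C (Δ e) := by rw [mul_assoc]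
        _ = (PowerSeries.X * F) * PowerSeries.C (Δ e) := by
            rw [(PowerSeries.commute_X F).eq]
        _ = PowerSeries.X * (F * PowerSeries.C (Δ e)) := by rw [mul_assoc]
        _ = PowerSeries.X * (De * F) := by rw [hDeF]
        _ = (PowerSeries.X * De) * F := by rw [mul_assoc]
    rw [h1, mul_assoc, hFG, mul_one, hDedef, hQQdef]
    rw [show ((1 : A) ⊗ₜ[ℚ] (1 : A)) = (1 : A ⊗[ℚ] A) from (Algebra.TensorProduct.one_def).symm,
      map_one, map_add, sq]
    noncomm_ring
  exact ⟨hcl1, hU, hcl3, hcl4⟩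
end

section
/- The two-tensor r̃₁₂ = β₁ P_+ ∧ e_+ + P_− ∧ (αP_+ + α₁P₁ + α₂P₂) + ᾶ P_+ ∧ P₂ in the Poincaré algebra, with α₂ ≠ 0, does not satisfy the condition [[a, b]] = 0, i.e. the mixed CYBE terms between a = P_− ∧ (αP_+ + α₁P₁ + α₂P₂) + ᾶ P_+ ∧ P₂ and b = β₁ P_+ ∧ e_+ are nonzero; hence r̃₁₂ is not a classical r-matrix when α₂β₁ ≠ 0. -/
open scoped TensorProduct

noncomputable def phiAux {L : Type*} [LieRing L] [LieAlgebra ℂ L] (g : L →ₗ[ℂ] ℂ) (u : L) :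
    UniversalEnvelopingAlgebra ℂ L →ₗ[ℂ] ℂ :=
  g ∘ₗ LinearMap.applyₗ (R := ℂ) u ∘ₗ
    (UniversalEnvelopingAlgebra.lift ℂ (LieAlgebra.ad ℂ L)).toLinearMap

lemma phiAux_ι {L : Type*} [LieRing L] [LieAlgebra ℂ L] (g : L →ₗ[ℂ] ℂ) (u x : L) :
    phiAux g u (UniversalEnvelopingAlgebra.ι ℂ x) = g ⁅x, u⁆ := by
  simp [phiAux, UniversalEnvelopingAlgebra.lift_ι_apply]

lemma phiAux_ι_mul {L : Type*} [LieRing L] [LieAlgebra ℂ L] (g : L →ₗ[ℂ] ℂ) (u x y : L) :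
    phiAux g u (UniversalEnvelopingAlgebra.ι ℂ x * UniversalEnvelopingAlgebra.ι ℂ y) =
      g ⁅x, ⁅y, u⁆⁆ := by
  simp [phiAux, UniversalEnvelopingAlgebra.lift_ι_apply, Module.End.mul_apply]

lemma phiAux_one {L : Type*} [LieRing L] [LieAlgebra ℂ L] (g : L →ₗ[ℂ] ℂ) (u : L) :
    phiAux g u 1 = g u := by
  simp [phiAux]

lemma exists_dual_family {K V : Type*} [Field K] [AddCommGroup V] [Module K V]
    {n : ℕ} {v : Fin n → V} (hv : LinearIndependent K v) :
    ∃ f : Fin n → (V →ₗ[K] K), ∀ i j, f i (v j) = if j = i then 1 else 0 := by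
  obtain ⟨q, hq⟩ := (Submodule.span K (Set.range v)).exists_isCompl
  refine ⟨fun i => Finsupp.lapply i ∘ₗ hv.repr ∘ₗ Submodule.linearProjOfIsCompl _ q hq,
    fun i j => ?_⟩
  have hmem : v j ∈ Submodule.span K (Set.range v) := Submodule.subset_span ⟨j, rfl⟩
  have h1 : Submodule.linearProjOfIsCompl _ q hq (v j) = ⟨v j, hmem⟩ :=
    Submodule.linearProjOfIsCompl_apply_left hq ⟨v j, hmem⟩
  simp [LinearMap.comp_apply, h1, hv.repr_eq_single j ⟨v j, hmem⟩ rfl, Finsupp.single_apply]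

set_option maxHeartbeats 4000000 in
/-- for `r̃₁₂ = β₁ P₊ ∧ e₊ + P₋ ∧ (αP₊ + α₁P₁ + α₂P₂) + ᾶ P₊ ∧ P₂` with
`α₂β₁ ≠ 0`, the mixed Schouten terms `[[a, b]]` between the momentum part `a` and
`b = β₁ P₊ ∧ e₊` do not vanish, so `r̃₁₂` is not a classical r-matrix. -/
theorem poincare_r12tilde_not_r_matrix {L : Type*} [LieRing L] [LieAlgebra ℂ L]
    (M N Pv : Fin 3 → L) (P0 : L)
    (hMM : ∀ i j, ⁅M i, M j⁆ = Complex.I • ∑ k, (eps i j k : ℂ) • M k)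
    (hMN : ∀ i j, ⁅M i, N j⁆ = Complex.I • ∑ k, (eps i j k : ℂ) • N k)
    (hNN : ∀ i j, ⁅N i, N j⁆ = -(Complex.I • ∑ k, (eps i j k : ℂ) • M k))
    (hMP : ∀ i j, ⁅M i, Pv j⁆ = Complex.I • ∑ k, (eps i j k : ℂ) • Pv k)
    (hMP0 : ∀ i, ⁅M i, P0⁆ = 0)
    (hNP : ∀ i j, ⁅N i, Pv j⁆ = if i = j then -(Complex.I • P0) else 0)
    (hNP0 : ∀ i, ⁅N i, P0⁆ = -(Complex.I • Pv i))
    (hPP : ∀ i j, ⁅Pv i, Pv j⁆ = 0)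
    (hP0P : ∀ i, ⁅P0, Pv i⁆ = 0)
    -- the ten generators are linearly independent (so that we are in a genuine
    -- Poincaré algebra, not a degenerate quotient)
    (hli : LinearIndependent ℂ
      ![M 0, M 1, M 2, N 0, N 1, N 2, P0, Pv 0, Pv 1, Pv 2])
    (β₁ α α₁ α₂ α' : ℂ) (hα₂ : α₂ ≠ 0) (hβ₁ : β₁ ≠ 0) :
    let ep : L := Complex.I • (N 0 + M 1)
    let Pp : L := P0 + Pv 2
    let Pm : L := P0 - Pv 2
    let A := UniversalEnvelopingAlgebra ℂ L
    let ι : L → A := fun z => UniversalEnvelopingAlgebra.ι ℂ z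
    let w : L → L → A ⊗[ℂ] A := fun u v => ι u ⊗ₜ[ℂ] ι v - ι v ⊗ₜ[ℂ] ι u
    -- a = P₋ ∧ (αP₊ + α₁P₁ + α₂P₂) + ᾶ P₊ ∧ P₂,  b = β₁ P₊ ∧ e₊
    let a : A ⊗[ℂ] A := w Pm (α • Pp + α₁ • Pv 0 + α₂ • Pv 1) + α' • w Pp (Pv 1)
    let b : A ⊗[ℂ] A := β₁ • w Pp ep
    let E12 : (A ⊗[ℂ] A) →ₐ[ℂ] A ⊗[ℂ] (A ⊗[ℂ] A) :=
      Algebra.TensorProduct.map (AlgHom.id ℂ A) Algebra.TensorProduct.includeLeft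
    let E13 : (A ⊗[ℂ] A) →ₐ[ℂ] A ⊗[ℂ] (A ⊗[ℂ] A) :=
      Algebra.TensorProduct.map (AlgHom.id ℂ A) Algebra.TensorProduct.includeRight
    let E23 : (A ⊗[ℂ] A) →ₐ[ℂ] A ⊗[ℂ] (A ⊗[ℂ] A) := Algebra.TensorProduct.includeRight
    -- the mixed Schouten terms [[a, b]] do not vanish
    ⁅E12 a, E13 b⁆ + ⁅E12 b, E13 a⁆ + ⁅E12 a, E23 b⁆ + ⁅E12 b, E23 a⁆ +
      ⁅E13 a, E23 b⁆ + ⁅E13 b, E23 a⁆ ≠ 0 := by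
  intro ep Pp Pm A ιf w a b E12 E13 E23
  intro hcon
  obtain ⟨f, hf⟩ := exists_dual_family hli
  have hf9_0 : f 9 (M 0) = 0 := by simpa using hf 9 0
  have hf9_1 : f 9 (M 1) = 0 := by simpa using hf 9 1
  have hf9_2 : f 9 (M 2) = 0 := by simpa using hf 9 2
  have hf9_3 : f 9 (N 0) = 0 := by simpa using hf 9 3
  have hf9_4 : f 9 (N 1) = 0 := by simpa using hf 9 4
  have hf9_5 : f 9 (N 2) = 0 := by simpa using hf 9 5
  have hf9_6 : f 9 (P0) = 0 := by simpa using hf 9 6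
  have hf9_7 : f 9 (Pv 0) = 0 := by simpa using hf 9 7
  have hf9_8 : f 9 (Pv 1) = 0 := by simpa using hf 9 8
  have hf9_9 : f 9 (Pv 2) = 1 := by simpa using hf 9 9
  have hf6_0 : f 6 (M 0) = 0 := by simpa using hf 6 0
  have hf6_1 : f 6 (M 1) = 0 := by simpa using hf 6 1
  have hf6_2 : f 6 (M 2) = 0 := by simpa using hf 6 2
  have hf6_3 : f 6 (N 0) = 0 := by simpa using hf 6 3
  have hf6_4 : f 6 (N 1) = 0 := by simpa using hf 6 4
  have hf6_5 : f 6 (N 2) = 0 := by simpa using hf 6 5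
  have hf6_6 : f 6 (P0) = 1 := by simpa using hf 6 6
  have hf6_7 : f 6 (Pv 0) = 0 := by simpa using hf 6 7
  have hf6_8 : f 6 (Pv 1) = 0 := by simpa using hf 6 8
  have hf6_9 : f 6 (Pv 2) = 0 := by simpa using hf 6 9
  have hNM : ∀ i j, ⁅N i, M j⁆ = -(Complex.I • ∑ k, (eps j i k : ℂ) • N k) := fun i j => by
    rw [← lie_skew, hMN j i]
  have hPM : ∀ i j, ⁅Pv i, M j⁆ = -(Complex.I • ∑ k, (eps j i k : ℂ) • Pv k) := fun i j => by
    rw [← lie_skew, hMP j i]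
  have hP0M : ∀ i, ⁅P0, M i⁆ = 0 := fun i => by rw [← lie_skew, hMP0 i, neg_zero]
  have hPN : ∀ i j, ⁅Pv i, N j⁆ = if j = i then Complex.I • P0 else 0 := fun i j => by
    rw [← lie_skew, hNP j i]; split <;> simp
  have hP0N : ∀ i, ⁅P0, N i⁆ = Complex.I • Pv i := fun i => by
    rw [← lie_skew, hNP0 i]; simp
  have hPvP0 : ∀ i, ⁅Pv i, P0⁆ = 0 := fun i => by rw [← lie_skew, hP0P i, neg_zero]
  set F : (UniversalEnvelopingAlgebra ℂ L ⊗[ℂ]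
      (UniversalEnvelopingAlgebra ℂ L ⊗[ℂ] UniversalEnvelopingAlgebra ℂ L)) →ₗ[ℂ] ℂ :=
    LinearMap.mul' ℂ ℂ ∘ₗ TensorProduct.map (phiAux (f 9) (N 2))
      (LinearMap.mul' ℂ ℂ ∘ₗ TensorProduct.map (phiAux (f 6) (N 0)) (phiAux (f 6) (N 1)))
    with hFdef
  have hF : ∀ x y z, F (x ⊗ₜ[ℂ] (y ⊗ₜ[ℂ] z)) =
      phiAux (f 9) (N 2) x * (phiAux (f 6) (N 0) y * phiAux (f 6) (N 1) z) := fun x y z => by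
    simp [hFdef, TensorProduct.map_tmul, LinearMap.mul'_apply]
  have h := congrArg F hcon
  rw [map_zero] at h
  simp (config := { zetaDelta := true }) only [Ring.lie_def, map_add, map_sub, map_smul,
    Algebra.TensorProduct.map_tmul, Algebra.TensorProduct.includeLeft_apply,
    Algebra.TensorProduct.includeRight_apply, AlgHom.coe_id, id_eq,
    Algebra.TensorProduct.tmul_mul_tmul, mul_one, one_mul,
    sub_mul, mul_sub, add_mul, mul_add, smul_mul_assoc, mul_smul_comm,
    TensorProduct.tmul_sub, TensorProduct.sub_tmul, TensorProduct.tmul_add,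
    TensorProduct.add_tmul, TensorProduct.tmul_smul, ← TensorProduct.smul_tmul',
    hF, phiAux_ι, phiAux_ι_mul, phiAux_one] at h
  simp [Complex.I_mul_I, lie_add, add_lie, lie_sub, sub_lie, lie_smul, smul_lie, lie_self, lie_zero,
    zero_lie, hMM, hMN, hNN, hMP, hMP0, hNP, hNP0, hPP, hP0P, hNM, hPM, hP0M, hPN, hP0N,
    hPvP0, Fin.sum_univ_three,
      show ((eps 0 0 0 : ℤ) : ℂ) = (0) by norm_num [show eps 0 0 0 = (0) from rfl],
      show ((eps 0 0 1 : ℤ) : ℂ) = (0) by norm_num [show eps 0 0 1 = (0) from rfl],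
      show ((eps 0 0 2 : ℤ) : ℂ) = (0) by norm_num [show eps 0 0 2 = (0) from rfl],
      show ((eps 0 1 0 : ℤ) : ℂ) = (0) by norm_num [show eps 0 1 0 = (0) from rfl],
      show ((eps 0 1 1 : ℤ) : ℂ) = (0) by norm_num [show eps 0 1 1 = (0) from rfl],
      show ((eps 0 1 2 : ℤ) : ℂ) = (1) by norm_num [show eps 0 1 2 = (1) from rfl],
      show ((eps 0 2 0 : ℤ) : ℂ) = (0) by norm_num [show eps 0 2 0 = (0) from rfl],
      show ((eps 0 2 1 : ℤ) : ℂ) = (-1) by norm_num [show eps 0 2 1 = (-1) from rfl],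
      show ((eps 0 2 2 : ℤ) : ℂ) = (0) by norm_num [show eps 0 2 2 = (0) from rfl],
      show ((eps 1 0 0 : ℤ) : ℂ) = (0) by norm_num [show eps 1 0 0 = (0) from rfl],
      show ((eps 1 0 1 : ℤ) : ℂ) = (0) by norm_num [show eps 1 0 1 = (0) from rfl],
      show ((eps 1 0 2 : ℤ) : ℂ) = (-1) by norm_num [show eps 1 0 2 = (-1) from rfl],
      show ((eps 1 1 0 : ℤ) : ℂ) = (0) by norm_num [show eps 1 1 0 = (0) from rfl],
      show ((eps 1 1 1 : ℤ) : ℂ) = (0) by norm_num [show eps 1 1 1 = (0) from rfl],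
      show ((eps 1 1 2 : ℤ) : ℂ) = (0) by norm_num [show eps 1 1 2 = (0) from rfl],
      show ((eps 1 2 0 : ℤ) : ℂ) = (1) by norm_num [show eps 1 2 0 = (1) from rfl],
      show ((eps 1 2 1 : ℤ) : ℂ) = (0) by norm_num [show eps 1 2 1 = (0) from rfl],
      show ((eps 1 2 2 : ℤ) : ℂ) = (0) by norm_num [show eps 1 2 2 = (0) from rfl],
      show ((eps 2 0 0 : ℤ) : ℂ) = (0) by norm_num [show eps 2 0 0 = (0) from rfl],
      show ((eps 2 0 1 : ℤ) : ℂ) = (1) by norm_num [show eps 2 0 1 = (1) from rfl],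
      show ((eps 2 0 2 : ℤ) : ℂ) = (0) by norm_num [show eps 2 0 2 = (0) from rfl],
      show ((eps 2 1 0 : ℤ) : ℂ) = (-1) by norm_num [show eps 2 1 0 = (-1) from rfl],
      show ((eps 2 1 1 : ℤ) : ℂ) = (0) by norm_num [show eps 2 1 1 = (0) from rfl],
      show ((eps 2 1 2 : ℤ) : ℂ) = (0) by norm_num [show eps 2 1 2 = (0) from rfl],
      show ((eps 2 2 0 : ℤ) : ℂ) = (0) by norm_num [show eps 2 2 0 = (0) from rfl],
      show ((eps 2 2 1 : ℤ) : ℂ) = (0) by norm_num [show eps 2 2 1 = (0) from rfl],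
      show ((eps 2 2 2 : ℤ) : ℂ) = (0) by norm_num [show eps 2 2 2 = (0) from rfl],
    smul_add, smul_sub, smul_smul, smul_neg, neg_smul, one_smul, zero_smul, smul_zero,
    add_zero, zero_add, sub_zero, zero_sub, neg_zero, neg_neg, map_add, map_sub, map_smul,
    map_neg, map_zero, hf9_0, hf9_1, hf9_2, hf9_3, hf9_4, hf9_5, hf9_6, hf9_7, hf9_8, hf9_9, hf6_0, hf6_1, hf6_2, hf6_3, hf6_4, hf6_5, hf6_6, hf6_7, hf6_8, hf6_9,
    smul_eq_mul, mul_zero, zero_mul, mul_one, mul_neg, neg_mul] at h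
  have h2 : Complex.I * α₂ * β₁ = 0 := by linear_combination (-(1 : ℂ)/2) * h
  rcases mul_eq_zero.mp h2 with h3 | h3
  · rcases mul_eq_zero.mp h3 with h4 | h4
    · exact Complex.I_ne_zero h4
    · exact hα₂ h4
  · exact hβ₁ h3
end
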